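/- arXiv:1306.3736 — 2 statements merged into one kernel-verified Lean document; each statement's English description precedes it below -/
import Mathlib

section
/- Let r ≥ 2 and let f ∈ P = ℂ[X_0, …, X_r] be a squarefree homogeneous polynomial of degree d ≥ 1. Then the projective hypersurface X = V(f) ⊂ ℙ^r is nonsingular — meaning that for every nonzero point a ∈ ℂ^{r+1} at least one partial derivative ∂f/∂X_i does not vanish at a — if and only if the jacobian ring R(f) = P/J(f) is a finite-dimensional ℂ-vector space (i.e., has finite length as a P-module). -/
open MvPolynomial

-- helper 1: eval of homogeneous at scaled point
lemma eval_smul_of_isHomogeneous {σ : Type*} {R : Type*} [CommRing R]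
    {φ : MvPolynomial σ R} {n : ℕ} (h : φ.IsHomogeneous n) (t : R) (x : σ → R) :
    eval (t • x) φ = t ^ n * eval x φ := by
  rw [eval_eq, eval_eq, Finset.mul_sum]
  refine Finset.sum_congr rfl fun d hd => ?_
  have hdeg : ∑ i ∈ d.support, d i = n := by
    have := h (MvPolynomial.mem_support_iff.mp hd)
    rw [show (Finsupp.weight 1) d = ∑ i ∈ d.support, d i by
      simp [Finsupp.weight_apply, Finsupp.sum]] at this
    exact this
  calc coeff d φ * ∏ i ∈ d.support, (t • x) i ^ d i
      = coeff d φ * ∏ i ∈ d.support, (t ^ d i * x i ^ d i) := by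
        simp [mul_pow]
    _ = coeff d φ * ((∏ i ∈ d.support, t ^ d i) * ∏ i ∈ d.support, x i ^ d i) := by
        rw [Finset.prod_mul_distrib]
    _ = t ^ n * (coeff d φ * ∏ i ∈ d.support, x i ^ d i) := by
        rw [Finset.prod_pow_eq_pow_sum, hdeg]; ring

-- helper 2: pderiv of homogeneous is homogeneous
lemma isHomogeneous_pderiv {σ : Type*} {R : Type*} [CommRing R] [DecidableEq σ]
    {φ : MvPolynomial σ R} {n : ℕ} (h : φ.IsHomogeneous n) (i : σ) :
    (pderiv i φ).IsHomogeneous (n - 1) := by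
  have : pderiv i φ = ∑ v ∈ φ.support, monomial (v - Finsupp.single i 1) (coeff v φ * v i) := by
    conv_lhs => rw [φ.as_sum]
    rw [map_sum]
    simp [pderiv_monomial]
  rw [this, ← mem_homogeneousSubmodule]
  refine Submodule.sum_mem _ fun v hv => ?_
  rw [mem_homogeneousSubmodule]
  by_cases hvi : v i = 0
  · rw [hvi]; simp only [Nat.cast_zero, mul_zero, map_zero]
    exact isHomogeneous_zero _ _ _
  · apply isHomogeneous_monomial
    have hvd : v.degree = n := by
      have := h (MvPolynomial.mem_support_iff.mp hv)
      rw [Finsupp.degree_eq_weight_one]; exact this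
    have hle : Finsupp.single i 1 ≤ v := by
      rw [Finsupp.single_le_iff]; omega
    have : (v - Finsupp.single i 1) + Finsupp.single i 1 = v := tsub_add_cancel_of_le hle
    have hdeg : (v - Finsupp.single i 1).degree + 1 = n := by
      have hadd : ∀ u w : σ →₀ ℕ, (u + w).degree = u.degree + w.degree := fun u w => by
        simp [Finsupp.degree_eq_weight_one, map_add]
      have hsingle : (Finsupp.single i 1).degree = 1 := by
        simp [Finsupp.degree_single]
      have h2 := congrArg Finsupp.degree this
      rw [hadd, hsingle, hvd] at h2
      omega
    omega

noncomputable section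

/-- The polynomial ring `P = ℂ[X_0, …, X_r]`. -/
abbrev P (r : ℕ) : Type := MvPolynomial (Fin (r + 1)) ℂ

/-- The gradient (jacobian) ideal `J(f) = (∂f/∂X_0, …, ∂f/∂X_r)`. -/
def jacobianIdeal (r : ℕ) (f : P r) : Ideal (P r) :=
  Ideal.span (Set.range fun i => MvPolynomial.pderiv i f)

theorem stmt_6 (r : ℕ) (hr : 2 ≤ r) (f : P r) (d : ℕ)
    (hsf : Squarefree f) (hfh : f.IsHomogeneous d) (hd : 1 ≤ d) :
    (∀ a : Fin (r + 1) → ℂ, a ≠ 0 → ∃ i, eval a (MvPolynomial.pderiv i f) ≠ 0) ↔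
      FiniteDimensional ℂ (P r ⧸ jacobianIdeal r f) := by
  set J := jacobianIdeal r f with hJ
  constructor
  · -- nonsingular → finite dimensional
    intro hns
    -- every X i is in the radical of J
    have hX : ∀ i : Fin (r + 1), ∃ n : ℕ, (X i : P r) ^ n ∈ J := by
      intro i
      have hzl : zeroLocus ℂ J ≤ ({0} : Set (Fin (r + 1) → ℂ)) := by
        intro x hx
        by_contra hx0
        obtain ⟨i, hi⟩ := hns x hx0
        exact hi (hx _ (Ideal.subset_span ⟨i, rfl⟩))
      have hrad : (X i : P r) ∈ J.radical := by
        rw [← vanishingIdeal_zeroLocus_eq_radical (K := ℂ)]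
        intro x hx
        have : x = 0 := hzl hx
        simp [this]
      exact hrad
    -- images of X i in the quotient are nilpotent, hence integral
    have hint : ∀ x ∈ Set.range fun i : Fin (r + 1) =>
        Ideal.Quotient.mkₐ ℂ J (X i), IsIntegral ℂ x := by
      rintro _ ⟨i, rfl⟩
      obtain ⟨n, hn⟩ := hX i
      refine ⟨Polynomial.X ^ n, Polynomial.monic_X_pow n, ?_⟩
      simp only [Polynomial.eval₂_X_pow, ← map_pow]
      rw [Ideal.Quotient.mkₐ_eq_mk, Ideal.Quotient.eq_zero_iff_mem]
      exact hn
    have hadj : Algebra.adjoin ℂ (Set.range fun i : Fin (r + 1) =>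
        Ideal.Quotient.mkₐ ℂ J (X i)) = ⊤ := by
      have : (Set.range fun i : Fin (r + 1) => Ideal.Quotient.mkₐ ℂ J (X i)) =
          Ideal.Quotient.mkₐ ℂ J '' Set.range (X : Fin (r + 1) → P r) := by
        rw [← Set.range_comp]; rfl
      rw [this, ← AlgHom.map_adjoin, MvPolynomial.adjoin_range_X, Algebra.map_top,
        AlgHom.range_eq_top]
      exact Ideal.Quotient.mk_surjective
    have hfg := fg_adjoin_of_finite (Set.finite_range _) hint
    rw [hadj] at hfg
    have : Module.Finite ℂ (P r ⧸ J) := by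
      rw [Module.finite_def]
      simpa using hfg
    exact this
  · -- finite dimensional → nonsingular
    intro hfd a ha
    by_contra h0
    push_neg at h0
    -- evaluation at t • a kills J for every t
    have hker : ∀ t : ℂ, J ≤ RingHom.ker (eval (t • a) : P r →+* ℂ) := by
      intro t
      rw [hJ, jacobianIdeal, Ideal.span_le]
      rintro _ ⟨i, rfl⟩
      rw [SetLike.mem_coe, RingHom.mem_ker,
        eval_smul_of_isHomogeneous (isHomogeneous_pderiv hfh i), h0 i, mul_zero]
    -- the algebra homs
    let φ : ℂ → ((P r ⧸ J) →ₐ[ℂ] ℂ) := fun t =>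
      Ideal.Quotient.liftₐ J (MvPolynomial.aeval (t • a)) (by
        intro p hp
        have := hker t hp
        rw [RingHom.mem_ker] at this; rw [MvPolynomial.aeval_def, Algebra.algebraMap_self, MvPolynomial.eval₂_id]; exact this)
    -- they are pairwise distinct
    obtain ⟨i, hai⟩ : ∃ i, a i ≠ 0 := by
      by_contra h
      push_neg at h
      exact ha (funext h)
    have hφval : ∀ t : ℂ, φ t (Ideal.Quotient.mk J (X i)) = t * a i := by
      intro t
      show Ideal.Quotient.liftₐ J _ _ (Ideal.Quotient.mk J (X i)) = _
      rw [Ideal.Quotient.liftₐ_apply]; erw [Ideal.Quotient.lift_mk]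
      simp
    have hinj : Function.Injective fun t : ℂ => ((φ t : (P r ⧸ J) →* ℂ)) := by
      intro s t hst
      have := congrArg (fun g : (P r ⧸ J) →* ℂ => g (Ideal.Quotient.mk J (X i))) hst
      simp only at this
      have hs : φ s (Ideal.Quotient.mk J (X i)) = φ t (Ideal.Quotient.mk J (X i)) := this
      rw [hφval, hφval] at hs
      exact mul_right_cancel₀ hai hs
    have li1 : LinearIndependent ℂ fun t : ℂ => ⇑(φ t : (P r ⧸ J) →* ℂ) :=
      (linearIndependent_monoidHom (P r ⧸ J) ℂ).comp _ hinj
    -- transfer to the dual space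
    let G : ((P r ⧸ J) →ₗ[ℂ] ℂ) →ₗ[ℂ] ((P r ⧸ J) → ℂ) :=
      { toFun := fun v => ⇑v, map_add' := fun _ _ => rfl, map_smul' := fun _ _ => rfl }
    have li2 : LinearIndependent ℂ fun t : ℂ => (φ t).toLinearMap :=
      LinearIndependent.of_comp G li1
    have : Finite ℂ := li2.finite
    exact not_finite ℂ
end
end

section
/- Let f ∈ P = ℂ[X_0, X_1, X_2] be a squarefree homogeneous polynomial of degree d ≥ 2 such that the Krull dimension of P/J(f) is at most 1, and let τ be the stable value of the Hilbert function of the jacobian ring, i.e., the constant value of dim_ℂ (P/J(f))_k for all sufficiently large k (the global Tjurina number of the curve V(f)). Suppose the syzygy module Syz = {(a_0, a_1, a_2) ∈ P³ : a_0·∂f/∂X_0 + a_1·∂f/∂X_1 + a_2·∂f/∂X_2 = 0} is a free graded P-module with a homogeneous basis consisting of two syzygies of degrees a and b (i.e., V(f) is a free curve with exponents a, b). Then a + b = d − 1 and a² + ab + b² = τ. -/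
open MvPolynomial

noncomputable section

/-- The polynomial ring `P = ℂ[X_0, X_1, X_2]`. -/
abbrev P3 : Type := MvPolynomial (Fin 3) ℂ

/-- The gradient (jacobian) ideal `J(f) = (∂f/∂X_0, ∂f/∂X_1, ∂f/∂X_2)`. -/
def jacobianIdeal3 (f : P3) : Ideal P3 :=
  Ideal.span (Set.range fun i => MvPolynomial.pderiv i f)

/-- The degree-`k` graded piece of `P/I`: the image in `P/I` of the space of
homogeneous polynomials of degree `k`, viewed as a `ℂ`-subspace. -/
def quotPiece3 (I : Ideal P3) (k : ℕ) : Submodule ℂ (P3 ⧸ I) :=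
  Submodule.map (Ideal.Quotient.mkₐ ℂ I).toLinearMap (homogeneousSubmodule (Fin 3) ℂ k)

/-- The module of syzygies of the partial derivatives of `f`:
triples `(a_0, a_1, a_2)` with `a_0·∂f/∂X_0 + a_1·∂f/∂X_1 + a_2·∂f/∂X_2 = 0`. -/
def syzygyModule (f : P3) : Submodule P3 (Fin 3 → P3) where
  carrier := {a | ∑ i, a i * MvPolynomial.pderiv i f = 0}
  zero_mem' := by simp
  add_mem' := by
    intro a b ha hb
    simp only [Set.mem_setOf_eq] at *
    simp [Pi.add_apply, add_mul, Finset.sum_add_distrib, ha, hb]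
  smul_mem' := by
    intro c a ha
    simp only [Set.mem_setOf_eq] at *
    simp [Pi.smul_apply, smul_eq_mul, mul_assoc, ← Finset.mul_sum, ha]

-- ===================== auxiliary lemmas =====================

lemma aux_pderiv_isHomogeneous {σ : Type*} {R : Type*} [CommSemiring R] [DecidableEq σ]
    {f : MvPolynomial σ R} {d : ℕ} (hf : f.IsHomogeneous d) (i : σ) :
    (pderiv i f).IsHomogeneous (d - 1) := by
  rw [show f = ∑ m ∈ f.support, monomial m (coeff m f) from (support_sum_monomial_coeff f).symm]
  rw [map_sum]
  apply MvPolynomial.IsHomogeneous.sum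
  intro m hm
  rw [pderiv_monomial]
  rcases Nat.eq_zero_or_pos (m i) with h0 | hpos
  · rw [h0]; simp only [Nat.cast_zero, mul_zero, map_zero]
    exact isHomogeneous_zero _ _ _
  · apply isHomogeneous_monomial
    have hdeg : Finsupp.weight 1 m = d := hf (Finsupp.mem_support_iff.mp hm)
    have heq : m = (m - Finsupp.single i 1) + Finsupp.single i 1 := by
      ext j
      simp only [Finsupp.coe_add, Finsupp.coe_tsub, Pi.add_apply, Pi.sub_apply,
        Finsupp.single_apply]
      rcases eq_or_ne i j with h | h
      · rw [if_pos h]; subst h; omega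
      · rw [if_neg h]; omega
    have hw1 : Finsupp.weight 1 (Finsupp.single i 1 : σ →₀ ℕ) = 1 := by
      rw [Finsupp.weight_apply, Finsupp.sum_single_index] <;> simp
    have h2 : Finsupp.weight 1 m = Finsupp.weight 1 (m - Finsupp.single i 1) + 1 := by
      conv_lhs => rw [heq]
      rw [map_add, hw1]
    rw [Finsupp.degree_eq_weight_one]
    have h3 : (Finsupp.weight fun _ => (1:ℕ)) (m - Finsupp.single i 1)
        = Finsupp.weight 1 (m - Finsupp.single i 1) := rfl
    omega

lemma aux_homogeneousComponent_mul_homogeneous {σ R : Type*} [CommSemiring R]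
    (p g : MvPolynomial σ R) {m : ℕ} (hg : g.IsHomogeneous m) (n : ℕ) :
    homogeneousComponent (n + m) (p * g) = homogeneousComponent n p * g := by
  conv_lhs => rw [show p = ∑ j ∈ Finset.range (p.totalDegree + 1), homogeneousComponent j p from
    (sum_homogeneousComponent p).symm]
  rw [Finset.sum_mul, map_sum]
  have hterm : ∀ j, homogeneousComponent (n + m) (homogeneousComponent j p * g)
      = if n = j then homogeneousComponent j p * g else 0 := by
    intro j
    have hmem : homogeneousComponent j p * g ∈ homogeneousSubmodule σ R (j + m) :=
      (mem_homogeneousSubmodule _ _).mpr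
        ((homogeneousComponent_isHomogeneous j p).mul hg)
    rw [homogeneousComponent_of_mem hmem]
    congr 1
    simp only [eq_iff_iff]
    omega
  simp_rw [hterm]
  rw [Finset.sum_ite_eq (Finset.range (p.totalDegree + 1)) n
    (fun j => homogeneousComponent j p * g)]
  split_ifs with h
  · rfl
  · rw [Finset.mem_range, not_lt] at h
    rw [homogeneousComponent_eq_zero, zero_mul]
    omega

abbrev MonIdx (k : ℕ) : Type := {x : Fin 3 →₀ ℕ // Finsupp.degree x = k}

def monIdxEquivSym (k : ℕ) : MonIdx k ≃ Sym (Fin 3) k :=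
  Equiv.subtypeEquiv (Multiset.toFinsupp (α := Fin 3)).toEquiv.symm (fun x => by
    have : (Multiset.toFinsupp (α := Fin 3)).toEquiv.symm x = Finsupp.toMultiset x := rfl
    rw [this]
    constructor
    · intro h
      show Multiset.card _ = k
      rw [Finsupp.card_toMultiset, ← h, Finsupp.degree]
      rfl
    · intro h
      have h2 : Multiset.card (Finsupp.toMultiset x) = k := h
      rw [Finsupp.card_toMultiset] at h2
      rw [Finsupp.degree, ← h2]
      rfl)

instance (k : ℕ) : Fintype (MonIdx k) := Fintype.ofEquiv _ (monIdxEquivSym k).symm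

lemma card_monIdx (k : ℕ) : Fintype.card (MonIdx k) = (k + 2).choose 2 := by
  rw [Fintype.card_congr (monIdxEquivSym k), Sym.card_sym_eq_choose]
  rw [Fintype.card_fin]
  have h1 : (3 + k - 1) = k + 2 := by omega
  rw [h1]
  have h2 := Nat.choose_symm (n := k + 2) (k := k) (by omega)
  have h3 : k + 2 - k = 2 := by omega
  rw [h3] at h2
  omega

lemma homogeneousSubmodule_eq_span (k : ℕ) :
    homogeneousSubmodule (Fin 3) ℂ k =
      Submodule.span ℂ (Set.range fun x : MonIdx k => (monomial x.1 (1:ℂ))) := by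
  apply le_antisymm
  · intro p hp
    rw [mem_homogeneousSubmodule] at hp
    rw [show p = ∑ m ∈ p.support, monomial m (coeff m p) from (support_sum_monomial_coeff p).symm]
    apply Submodule.sum_mem
    intro m hm
    have hdeg : Finsupp.degree m = k := by
      rw [Finsupp.degree_eq_weight_one]
      exact hp (Finsupp.mem_support_iff.mp hm)
    have : monomial m (coeff m p) = (coeff m p) • monomial m (1:ℂ) := by
      rw [smul_monomial, smul_eq_mul, mul_one]
    rw [this]
    exact Submodule.smul_mem _ _ (Submodule.subset_span ⟨⟨m, hdeg⟩, rfl⟩)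
  · rw [Submodule.span_le]
    rintro _ ⟨x, rfl⟩
    rw [SetLike.mem_coe, mem_homogeneousSubmodule]
    exact isHomogeneous_monomial _ x.2

instance homog_findim (k : ℕ) : FiniteDimensional ℂ (homogeneousSubmodule (Fin 3) ℂ k) := by
  rw [homogeneousSubmodule_eq_span k]
  exact FiniteDimensional.span_of_finite ℂ (Set.finite_range _)

lemma finrank_homog (k : ℕ) :
    Module.finrank ℂ (homogeneousSubmodule (Fin 3) ℂ k) = (k + 2).choose 2 := by
  have hli : LinearIndependent ℂ (fun x : MonIdx k => (monomial x.1 (1:ℂ))) := by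
    have hb := (MvPolynomial.basisMonomials (Fin 3) ℂ).linearIndependent
    have : (fun x : MonIdx k => (monomial x.1 (1:ℂ)))
        = (⇑(MvPolynomial.basisMonomials (Fin 3) ℂ)) ∘ (fun x : MonIdx k => x.1) := by
      funext x
      simp [MvPolynomial.coe_basisMonomials]
    rw [this]
    exact hb.comp _ Subtype.val_injective
  rw [homogeneousSubmodule_eq_span k, finrank_span_eq_card hli, card_monIdx]
-- ψ : (V e)³ → P3, u ↦ ∑ uᵢ ∂ᵢf
def psiMap (f : P3) (e : ℕ) :
    (Fin 3 → homogeneousSubmodule (Fin 3) ℂ e) →ₗ[ℂ] P3 where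
  toFun u := ∑ i, (u i : P3) * pderiv i f
  map_add' u v := by
    simp [add_mul, Finset.sum_add_distrib]
  map_smul' r u := by
    simp [smul_mul_assoc, Finset.smul_sum]

lemma range_psiMap (f : P3) (e w : ℕ) (hW : ∀ i, (pderiv i f).IsHomogeneous w) :
    LinearMap.range (psiMap f e) =
      (jacobianIdeal3 f).restrictScalars ℂ ⊓ homogeneousSubmodule (Fin 3) ℂ (e + w) := by
  apply le_antisymm
  · rintro _ ⟨u, rfl⟩
    constructor
    · show ∑ i, (u i : P3) * pderiv i f ∈ jacobianIdeal3 f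
      apply Ideal.sum_mem
      intro i _
      exact Ideal.mul_mem_left _ _ (Ideal.subset_span ⟨i, rfl⟩)
    · show ∑ i, (u i : P3) * pderiv i f ∈ homogeneousSubmodule (Fin 3) ℂ (e + w)
      apply Submodule.sum_mem
      intro i _
      rw [mem_homogeneousSubmodule]
      exact ((mem_homogeneousSubmodule _ _).mp (u i).2).mul (hW i)
  · rintro p ⟨hpJ, hph⟩
    have hpJ' : p ∈ Ideal.span (Set.range fun i => pderiv i f) := hpJ
    rw [Ideal.mem_span_range_iff_exists_fun] at hpJ'
    obtain ⟨g, hg⟩ := hpJ'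
    refine ⟨fun i => ⟨homogeneousComponent e (g i), homogeneousComponent_mem _ _⟩, ?_⟩
    show ∑ i, homogeneousComponent e (g i) * pderiv i f = p
    have : p = homogeneousComponent (e + w) p := by
      rw [homogeneousComponent_of_mem hph, if_pos rfl]
    rw [this, ← hg, map_sum]
    apply Finset.sum_congr rfl
    intro i _
    exact (aux_homogeneousComponent_mul_homogeneous (g i) (pderiv i f) (hW i) e).symm
lemma quot_count (I : Ideal P3) (k : ℕ) :
    Module.finrank ℂ (quotPiece3 I k) +
      Module.finrank ℂ ((I.restrictScalars ℂ) ⊓ homogeneousSubmodule (Fin 3) ℂ k :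
        Submodule ℂ P3) = (k + 2).choose 2 := by
  set V := homogeneousSubmodule (Fin 3) ℂ k
  set χ := (Ideal.Quotient.mkₐ ℂ I).toLinearMap.domRestrict V with hχ
  have hrn := LinearMap.finrank_range_add_finrank_ker χ
  have hrange : LinearMap.range χ = quotPiece3 I k := by
    rw [hχ, LinearMap.range_domRestrict]
    rfl
  have hkerq : LinearMap.ker (Ideal.Quotient.mkₐ ℂ I).toLinearMap = I.restrictScalars ℂ := by
    ext x
    rw [LinearMap.mem_ker]
    show Ideal.Quotient.mk I x = 0 ↔ _
    rw [Ideal.Quotient.eq_zero_iff_mem]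
    rfl
  have hker : LinearMap.ker χ = Submodule.comap V.subtype ((I.restrictScalars ℂ) ⊓ V) := by
    rw [hχ, LinearMap.ker_domRestrict, hkerq]
    ext x
    simp only [Submodule.mem_comap, Submodule.mem_inf]
    exact ⟨fun h => ⟨h, x.2⟩, fun h => h.1⟩
  have hkerrank : Module.finrank ℂ (LinearMap.ker χ)
      = Module.finrank ℂ ((I.restrictScalars ℂ) ⊓ V : Submodule ℂ P3) := by
    rw [hker]
    exact (Submodule.comapSubtypeEquivOfLe inf_le_right).finrank_eq
  rw [hrange, hkerrank] at hrn
  rw [hrn, finrank_homog]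
def thetaMap (s t : Fin 3 → P3) (a b m : ℕ) (hsh : ∀ i, (s i).IsHomogeneous a)
    (hth : ∀ i, (t i).IsHomogeneous b) :
    (homogeneousSubmodule (Fin 3) ℂ (b + m) × homogeneousSubmodule (Fin 3) ℂ (a + m)) →ₗ[ℂ]
      (Fin 3 → homogeneousSubmodule (Fin 3) ℂ (a + b + m)) where
  toFun pq i := ⟨(pq.1 : P3) * s i + (pq.2 : P3) * t i, by
    apply Submodule.add_mem
    · rw [mem_homogeneousSubmodule]
      have h := ((mem_homogeneousSubmodule _ _).mp pq.1.2).mul (hsh i)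
      rwa [show b + m + a = a + b + m by ring] at h
    · rw [mem_homogeneousSubmodule]
      have h := ((mem_homogeneousSubmodule _ _).mp pq.2.2).mul (hth i)
      rwa [show a + m + b = a + b + m by ring] at h⟩
  map_add' pq pq' := by
    funext i
    apply Subtype.ext
    show ((pq.1 + pq'.1 : _) : P3) * s i + ((pq.2 + pq'.2 : _) : P3) * t i = _
    simp only [Pi.add_apply, Submodule.coe_add]
    ring
  map_smul' r pq := by
    funext i
    apply Subtype.ext
    show ((r • pq.1 : _) : P3) * s i + ((r • pq.2 : _) : P3) * t i = _
    simp only [Pi.smul_apply, Submodule.coe_smul, RingHom.id_apply]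
    simp [smul_mul_assoc, smul_add]

lemma ker_psi_eq_range_theta (f : P3) (s t : Fin 3 → P3) (a b m : ℕ)
    (hsh : ∀ i, (s i).IsHomogeneous a) (hth : ∀ i, (t i).IsHomogeneous b) (hs : s ∈ syzygyModule f) (ht : t ∈ syzygyModule f)
    (B : Module.Basis (Fin 2) P3 (syzygyModule f))
    (hB0 : (B 0).val = s) (hB1 : (B 1).val = t) :
    LinearMap.ker (psiMap f (a + b + m)) = LinearMap.range (thetaMap s t a b m hsh hth) := by
  have hs' : ∑ i, s i * pderiv i f = 0 := hs
  have ht' : ∑ i, t i * pderiv i f = 0 := ht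
  apply le_antisymm
  · rintro u hu
    rw [LinearMap.mem_ker] at hu
    have husyz : (fun i => (u i : P3)) ∈ syzygyModule f := by
      show ∑ i, (u i : P3) * pderiv i f = 0
      exact hu
    set y : syzygyModule f := ⟨fun i => (u i : P3), husyz⟩ with hy
    have hrep := B.sum_repr y
    rw [Fin.sum_univ_two] at hrep
    set p : P3 := B.repr y 0 with hp
    set q : P3 := B.repr y 1 with hq
    have hval : ∀ i : Fin 3, (u i : P3) = p * s i + q * t i := by
      intro i
      have hv := congrArg Subtype.val hrep
      rw [Submodule.coe_add, SetLike.val_smul, SetLike.val_smul, hB0, hB1] at hv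
      have := congrFun hv i
      simp only [Pi.add_apply, Pi.smul_apply, smul_eq_mul] at this
      exact this.symm
    refine ⟨⟨⟨homogeneousComponent (b + m) p, homogeneousComponent_mem _ _⟩,
      ⟨homogeneousComponent (a + m) q, homogeneousComponent_mem _ _⟩⟩, ?_⟩
    funext i
    apply Subtype.ext
    show homogeneousComponent (b + m) p * s i + homogeneousComponent (a + m) q * t i
      = (u i : P3)
    have h1 : (u i : P3) = homogeneousComponent (a + b + m) (u i : P3) := by
      rw [homogeneousComponent_of_mem (u i).2, if_pos rfl]
    rw [h1, hval i, map_add]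
    congr 1
    · rw [show a + b + m = (b + m) + a by ring]
      exact (aux_homogeneousComponent_mul_homogeneous p (s i) (hsh i) (b + m)).symm
    · rw [show a + b + m = (a + m) + b by ring]
      exact (aux_homogeneousComponent_mul_homogeneous q (t i) (hth i) (a + m)).symm
  · rintro _ ⟨pq, rfl⟩
    rw [LinearMap.mem_ker]
    show ∑ i, ((pq.1 : P3) * s i + (pq.2 : P3) * t i) * pderiv i f = 0
    have : ∀ i : Fin 3, ((pq.1 : P3) * s i + (pq.2 : P3) * t i) * pderiv i f
        = (pq.1 : P3) * (s i * pderiv i f) + (pq.2 : P3) * (t i * pderiv i f) := by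
      intro i; ring
    simp_rw [this]
    rw [Finset.sum_add_distrib, ← Finset.mul_sum, ← Finset.mul_sum, hs', ht']
    ring

lemma theta_inj (f : P3) (s t : Fin 3 → P3) (a b m : ℕ)
    (hsh : ∀ i, (s i).IsHomogeneous a) (hth : ∀ i, (t i).IsHomogeneous b) (hs : s ∈ syzygyModule f) (ht : t ∈ syzygyModule f)
    (B : Module.Basis (Fin 2) P3 (syzygyModule f))
    (hB0 : (B 0).val = s) (hB1 : (B 1).val = t) :
    Function.Injective (thetaMap s t a b m hsh hth) := by
  rw [← LinearMap.ker_eq_bot, Submodule.eq_bot_iff]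
  rintro ⟨pp, qq⟩ hpq
  rw [LinearMap.mem_ker] at hpq
  set p : P3 := (pp : P3) with hpd
  set q : P3 := (qq : P3) with hqd
  have hcoord : ∀ i : Fin 3, p * s i + q * t i = 0 := by
    intro i
    have := congrFun hpq i
    exact congrArg Subtype.val this
  have hzero : p • (B 0) + q • (B 1) = 0 := by
    apply Subtype.ext
    rw [Submodule.coe_add, SetLike.val_smul, SetLike.val_smul, hB0, hB1]
    funext i
    simp only [Pi.add_apply, Pi.smul_apply, smul_eq_mul, Pi.zero_apply]
    exact hcoord i
  have hli := Fintype.linearIndependent_iff.mp B.linearIndependent ![p, q]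
  have hsum : ∑ i, ![p, q] i • B i = 0 := by
    rw [Fin.sum_univ_two]
    show ![p, q] 0 • B 0 + ![p, q] 1 • B 1 = 0
    simp only [Matrix.cons_val_zero, Matrix.cons_val_one, Matrix.head_cons]
    exact hzero
  have hp0 : p = 0 := hli hsum 0
  have hq0 : q = 0 := hli hsum 1
  apply Prod.ext
  · apply Subtype.ext; exact hp0
  · apply Subtype.ext; exact hq0

lemma ker_count (f : P3) (s t : Fin 3 → P3) (a b m : ℕ) (hsh : ∀ i, (s i).IsHomogeneous a) (hth : ∀ i, (t i).IsHomogeneous b) (hs : s ∈ syzygyModule f) (ht : t ∈ syzygyModule f)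
    (B : Module.Basis (Fin 2) P3 (syzygyModule f))
    (hB0 : (B 0).val = s) (hB1 : (B 1).val = t) :
    Module.finrank ℂ (LinearMap.ker (psiMap f (a + b + m)))
      = (b + m + 2).choose 2 + (a + m + 2).choose 2 := by
  rw [ker_psi_eq_range_theta f s t a b m hsh hth hs ht B hB0 hB1]
  rw [LinearMap.finrank_range_of_inj (theta_inj f s t a b m hsh hth hs ht B hB0 hB1)]
  rw [Module.finrank_prod, finrank_homog, finrank_homog]

lemma jpiece_count (f : P3) (s t : Fin 3 → P3) (a b m : ℕ) (hsh : ∀ i, (s i).IsHomogeneous a) (hth : ∀ i, (t i).IsHomogeneous b) (w : ℕ) (hW : ∀ i, (pderiv i f).IsHomogeneous w)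
    (hs : s ∈ syzygyModule f) (ht : t ∈ syzygyModule f)
    (B : Module.Basis (Fin 2) P3 (syzygyModule f))
    (hB0 : (B 0).val = s) (hB1 : (B 1).val = t) :
    Module.finrank ℂ (((jacobianIdeal3 f).restrictScalars ℂ ⊓
        homogeneousSubmodule (Fin 3) ℂ (a + b + m + w)) : Submodule ℂ P3)
      + ((b + m + 2).choose 2 + (a + m + 2).choose 2)
      = 3 * (a + b + m + 2).choose 2 := by
  have hrn := LinearMap.finrank_range_add_finrank_ker (psiMap f (a + b + m))
  rw [range_psiMap f (a + b + m) w hW,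
    ker_count f s t a b m hsh hth hs ht B hB0 hB1] at hrn
  rw [hrn]
  rw [Module.finrank_pi_fintype ℂ (M := fun _ : Fin 3 => homogeneousSubmodule (Fin 3) ℂ (a+b+m))]
  simp [finrank_homog]
lemma two_choose (n : ℕ) : 2 * (n + 2).choose 2 = (n + 1) * (n + 2) := by
  induction n with
  | zero => decide
  | succ k ih =>
    have h : (k + 1 + 2).choose 2 = (k + 2).choose 1 + (k + 2).choose 2 :=
      Nat.choose_succ_succ (k + 2) 1
    rw [h, Nat.choose_one_right]
    nlinarith [ih]

theorem stmt_8 (f : P3) (d : ℕ) (hd : 2 ≤ d) (hsf : Squarefree f) (hfh : f.IsHomogeneous d)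
    (hdim : ringKrullDim (P3 ⧸ jacobianIdeal3 f) ≤ 1)
    (τ : ℕ)
    (hτ : ∃ N : ℕ, ∀ k, N ≤ k →
      Module.finrank ℂ (quotPiece3 (jacobianIdeal3 f) k) = τ)
    (a b : ℕ) (s t : Fin 3 → P3)
    (hs : s ∈ syzygyModule f) (ht : t ∈ syzygyModule f)
    (hsh : ∀ i, (s i).IsHomogeneous a) (hth : ∀ i, (t i).IsHomogeneous b)
    (B : Module.Basis (Fin 2) P3 (syzygyModule f))
    (hB0 : (B 0).val = s) (hB1 : (B 1).val = t) :
    a + b = d - 1 ∧ a ^ 2 + a * b + b ^ 2 = τ := by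
  obtain ⟨N, hN⟩ := hτ
  obtain ⟨c, rfl⟩ : ∃ c, d = c + 2 := ⟨d - 2, by omega⟩
  have hW : ∀ i, (pderiv i f).IsHomogeneous (c + 1) := by
    intro i
    have h := aux_pderiv_isHomogeneous hfh i
    rwa [show c + 2 - 1 = c + 1 from rfl] at h
  have key : ∀ m : ℕ, N ≤ m → τ + 3 * (a + b + m + 2).choose 2
      = (a + b + m + (c + 1) + 2).choose 2
        + ((b + m + 2).choose 2 + (a + m + 2).choose 2) := by
    intro m hm
    have h1 := quot_count (jacobianIdeal3 f) (a + b + m + (c + 1))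
    have h2 := jpiece_count f s t a b m hsh hth (c + 1) hW hs ht B hB0 hB1
    have h3 : Module.finrank ℂ (quotPiece3 (jacobianIdeal3 f) (a + b + m + (c + 1))) = τ :=
      hN _ (by omega)
    omega
  have key2 : ∀ m : ℕ, N ≤ m → 2 * τ + 3 * ((a + b + m + 1) * (a + b + m + 2))
      = (a + b + m + c + 2) * (a + b + m + c + 3)
        + ((b + m + 1) * (b + m + 2) + (a + m + 1) * (a + m + 2)) := by
    intro m hm
    have h := key m hm
    have t1 := two_choose (a + b + m)
    have t2 := two_choose (a + b + m + (c + 1))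
    have t3 := two_choose (b + m)
    have t4 := two_choose (a + m)
    have t2' : (a + b + m + (c + 1) + 1) * (a + b + m + (c + 1) + 2)
        = (a + b + m + c + 2) * (a + b + m + c + 3) := by ring
    omega
  have e1 := key2 N le_rfl
  have e2 := key2 (N + 1) (by omega)
  zify at e1 e2
  have hc1 : (c : ℤ) + 1 = a + b := by
    have h2 : 2 * ((c : ℤ) + 1) = 2 * ((a : ℤ) + b) := by linear_combination e1 - e2
    linarith
  have hab : a + b = c + 1 := by exact_mod_cast hc1.symm
  refine ⟨by omega, ?_⟩
  have hz : (c : ℤ) = a + b - 1 := by linarith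
  rw [hz] at e1
  have h2τ : 2 * ((a : ℤ) ^ 2 + a * b + b ^ 2) = 2 * τ := by linear_combination -e1
  have : (a : ℤ) ^ 2 + a * b + b ^ 2 = τ := by linarith
  exact_mod_cast this
end
end
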